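/- Assume f satisfies (f0)–(f4). Then there exist a sequence (θ⁺_n) of strictly positive reals and a sequence (θ⁻_n) of strictly negative reals such that |θ⁺_n| → 0 and |θ⁻_n| → 0 as n → ∞, and f(θ⁺_n)·θ⁺_n > p_*·F(θ⁺_n) and f(θ⁻_n)·θ⁻_n > p_*·F(θ⁻_n) for every n. (Claim 2 in the proof of Lemma 2.3.) -/

import Mathlib

open Filter Set MeasureTheory

private lemma my_f_zero {c : ℝ} (hc : 1 < c) {f : ℝ → ℝ} (hf0 : Continuous f)
    (hf1 : Tendsto (fun t : ℝ => f t / |t| ^ (c - 1)) (nhdsWithin 0 {0}ᶜ) (nhds 0)) :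
    f 0 = 0 := by
  have hpow : Tendsto (fun t : ℝ => |t| ^ (c - 1)) (nhdsWithin 0 {0}ᶜ) (nhds 0) := by
    have h1 : ContinuousAt (fun x : ℝ => x ^ (c - 1)) 0 :=
      Real.continuousAt_rpow_const 0 (c - 1) (Or.inr (by linarith))
    have h1' := h1.tendsto
    rw [Real.zero_rpow (by intro h; linarith [h] : c - 1 ≠ 0)] at h1'
    have habs : Tendsto (fun t : ℝ => |t|) (nhds 0) (nhds 0) := by
      simpa using continuous_abs.tendsto (0:ℝ)
    exact (h1'.comp habs).mono_left nhdsWithin_le_nhds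
  have h2 : Tendsto f (nhdsWithin 0 {0}ᶜ) (nhds 0) := by
    have hmul := hf1.mul hpow
    rw [mul_zero] at hmul
    refine hmul.congr' ?_
    filter_upwards [self_mem_nhdsWithin] with t ht
    have hne : |t| ^ (c - 1) ≠ 0 :=
      (Real.rpow_pos_of_pos (abs_pos.2 ht) _).ne'
    field_simp
  have h3 : Tendsto f (nhdsWithin 0 {0}ᶜ) (nhds (f 0)) :=
    hf0.continuousAt.tendsto.mono_left nhdsWithin_le_nhds
  exact tendsto_nhds_unique h3 h2

private lemma my_small_bound {c : ℝ} (hc : 1 < c) {f F : ℝ → ℝ} (hf0 : Continuous f)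
    (hF : ∀ t : ℝ, F t = ∫ s in (0:ℝ)..t, f s)
    (hf1 : Tendsto (fun t : ℝ => f t / |t| ^ (c - 1)) (nhdsWithin 0 {0}ᶜ) (nhds 0)) :
    ∀ ε > 0, ∃ δ > 0, ∀ t : ℝ, t ≠ 0 → |t| < δ →
      |f t| ≤ ε * |t| ^ (c - 1) ∧ |F t| ≤ ε * |t| ^ c := by
  have hf00 : f 0 = 0 := my_f_zero hc hf0 hf1
  intro ε hε
  rw [Metric.tendsto_nhdsWithin_nhds] at hf1
  obtain ⟨δ, hδ, hd⟩ := hf1 ε hε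
  have hfb : ∀ x : ℝ, x ≠ 0 → |x| < δ → |f x| ≤ ε * |x| ^ (c - 1) := by
    intro x hx hxδ
    have hA : 0 < |x| ^ (c - 1) := Real.rpow_pos_of_pos (abs_pos.2 hx) _
    have hdx := hd (x := x) hx (by simpa [Real.dist_eq] using hxδ)
    rw [Real.dist_eq, sub_zero, abs_div, abs_of_pos hA] at hdx
    have h1 : |f x| = |f x| / |x| ^ (c - 1) * |x| ^ (c - 1) := by field_simp
    rw [h1]
    exact mul_le_mul_of_nonneg_right hdx.le hA.le
  refine ⟨δ, hδ, fun t ht htδ => ⟨hfb t ht htδ, ?_⟩⟩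
  have hC : ∀ x ∈ Set.uIoc (0:ℝ) t, ‖f x‖ ≤ ε * |t| ^ (c - 1) := by
    intro x hx
    have habs : |x| ≤ |t| := by
      rcases Set.mem_uIoc.1 hx with h | h
      · rw [abs_of_pos h.1]; exact h.2.trans (le_abs_self t)
      · rw [abs_of_nonpos h.2]; exact (neg_le_neg h.1.le).trans (neg_le_abs t)
    rcases eq_or_ne x 0 with rfl | hx0
    · rw [Real.norm_eq_abs, hf00, abs_zero]
      positivity
    · calc ‖f x‖ = |f x| := rfl
        _ ≤ ε * |x| ^ (c - 1) := hfb x hx0 (lt_of_le_of_lt habs htδ)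
        _ ≤ ε * |t| ^ (c - 1) :=
            mul_le_mul_of_nonneg_left
              (Real.rpow_le_rpow (abs_nonneg x) habs (by linarith)) hε.le
  have hnorm := intervalIntegral.norm_integral_le_of_norm_le_const hC
  have hcc : c - 1 + 1 = c := by ring
  calc |F t| = ‖∫ s in (0:ℝ)..t, f s‖ := by rw [hF t]; rfl
    _ ≤ ε * |t| ^ (c - 1) * |t - 0| := hnorm
    _ = ε * |t| ^ c := by
        rw [sub_zero, mul_assoc, ← Real.rpow_add_one (abs_ne_zero.2 ht), hcc]

private lemma my_Ft_pos {c : ℝ} (hc : 1 < c) {f F Ft : ℝ → ℝ}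
    (hFt : ∀ t : ℝ, Ft t = f t * t - 2 * F t)
    (hsmall : ∀ ε > 0, ∃ δ > 0, ∀ t : ℝ, t ≠ 0 → |t| < δ →
      |f t| ≤ ε * |t| ^ (c - 1) ∧ |F t| ≤ ε * |t| ^ c)
    (hf4a : StrictAntiOn (fun t : ℝ => Ft t / |t| ^ c) (Iio 0))
    (hf4b : StrictMonoOn (fun t : ℝ => Ft t / |t| ^ c) (Ioi 0)) :
    ∀ t : ℝ, t ≠ 0 → 0 < Ft t := by
  -- bound on Ft near zero
  have hFtb : ∀ ε > 0, ∃ δ > 0, ∀ t : ℝ, t ≠ 0 → |t| < δ → |Ft t| ≤ 3 * ε * |t| ^ c := by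
    intro ε hε
    obtain ⟨δ, hδ, h⟩ := hsmall ε hε
    refine ⟨δ, hδ, fun t ht htδ => ?_⟩
    obtain ⟨h1, h2⟩ := h t ht htδ
    have hcc : c - 1 + 1 = c := by ring
    have h3 : |f t * t| ≤ ε * |t| ^ c := by
      rw [abs_mul]
      calc |f t| * |t| ≤ ε * |t| ^ (c - 1) * |t| :=
            mul_le_mul_of_nonneg_right h1 (abs_nonneg t)
        _ = ε * |t| ^ c := by
            rw [mul_assoc, ← Real.rpow_add_one (abs_ne_zero.2 ht), hcc]
    calc |Ft t| = |f t * t - 2 * F t| := by rw [hFt t]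
      _ ≤ |f t * t| + |2 * F t| := abs_sub _ _
      _ = |f t * t| + 2 * |F t| := by rw [abs_mul 2 (F t)]; norm_num
      _ ≤ ε * |t| ^ c + 2 * (ε * |t| ^ c) := by linarith
      _ = 3 * ε * |t| ^ c := by ring
  set G := fun t : ℝ => Ft t / |t| ^ c with hG
  -- G is ≥ -3ε eventually near 0, on both sides
  have hGlow : ∀ ε > 0, ∃ δ > 0, ∀ s : ℝ, s ≠ 0 → |s| < δ → -(3 * ε) ≤ G s := by
    intro ε hε
    obtain ⟨δ, hδ, h⟩ := hFtb ε hε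
    refine ⟨δ, hδ, fun s hs hsδ => ?_⟩
    have hpos : 0 < |s| ^ c := Real.rpow_pos_of_pos (abs_pos.2 hs) _
    have hb := (abs_le.1 (h s hs hsδ)).1
    rw [hG]
    rw [le_div_iff₀ hpos]
    linarith
  -- G nonneg on positives
  have hGpos : ∀ t : ℝ, 0 < t → 0 ≤ G t := by
    intro t ht
    by_contra hneg
    push_neg at hneg
    have hε : 0 < -G t / 6 := by linarith
    obtain ⟨δ, hδ, h⟩ := hGlow (-G t / 6) hε
    set s := min (t / 2) (δ / 2) with hs
    have hs0 : 0 < s := lt_min (by linarith) (by linarith)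
    have hst : s < t := lt_of_le_of_lt (min_le_left _ _) (by linarith)
    have hsδ : |s| < δ := by
      rw [abs_of_pos hs0]; exact lt_of_le_of_lt (min_le_right _ _) (by linarith)
    have h1 : G s < G t := hf4b (mem_Ioi.2 hs0) (mem_Ioi.2 ht) hst
    have h2 := h s hs0.ne' hsδ
    linarith
  have hGneg : ∀ t : ℝ, t < 0 → 0 ≤ G t := by
    intro t ht
    by_contra hneg
    push_neg at hneg
    have hε : 0 < -G t / 6 := by linarith
    obtain ⟨δ, hδ, h⟩ := hGlow (-G t / 6) hε
    set s := max (t / 2) (-δ / 2) with hs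
    have hs0 : s < 0 := max_lt (by linarith) (by linarith)
    have hst : t < s := lt_of_lt_of_le (by linarith) (le_max_left _ _)
    have hsδ : |s| < δ := by
      rw [abs_of_neg hs0]
      have : -δ / 2 ≤ s := le_max_right _ _
      linarith
    have h1 : G s < G t := hf4a (mem_Iio.2 ht) (mem_Iio.2 hs0) hst
    have h2 := h s hs0.ne hsδ
    linarith
  intro t ht
  have hpos : 0 < |t| ^ c := Real.rpow_pos_of_pos (abs_pos.2 ht) _
  have hGt : 0 < G t := by
    rcases ht.lt_or_gt with htn | htp
    · have h1 : G (t / 2) < G t :=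
        hf4a (mem_Iio.2 htn) (mem_Iio.2 (by linarith)) (by linarith)
      have h2 := hGneg (t / 2) (by linarith)
      linarith
    · have h1 : G (t / 2) < G t :=
        hf4b (mem_Ioi.2 (by linarith)) (mem_Ioi.2 htp) (by linarith)
      have h2 := hGpos (t / 2) (by linarith)
      linarith
  have := (div_pos_iff.1 hGt)
  rcases this with ⟨h1, _⟩ | ⟨_, h2⟩
  · exact h1
  · linarith

private lemma my_dense_pos {c : ℝ} (hc : 2 < c) {f F : ℝ → ℝ} (hf0 : Continuous f)
    (hF : ∀ t : ℝ, F t = ∫ s in (0:ℝ)..t, f s)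
    (hsmall : ∀ ε > 0, ∃ δ' > 0, ∀ t : ℝ, t ≠ 0 → |t| < δ' →
      |f t| ≤ ε * |t| ^ (c - 1) ∧ |F t| ≤ ε * |t| ^ c)
    (hFtpos : ∀ t : ℝ, t ≠ 0 → 0 < f t * t - 2 * F t) :
    ∀ δ > 0, ∃ t : ℝ, 0 < t ∧ t < δ ∧ c * F t < f t * t := by
  intro δ hδ
  by_contra hcon
  push_neg at hcon
  have hcon' : ∀ t : ℝ, 0 < t → t < δ → f t * t ≤ c * F t := by
    intro t h1 h2; exact hcon t h1 h2
  have hFpos : ∀ t : ℝ, 0 < t → t < δ → 0 < F t := by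
    intro t ht htδ
    have h1 := hFtpos t ht.ne'
    have h2 := hcon' t ht htδ
    nlinarith
  have hFD : ∀ x : ℝ, HasDerivAt F (f x) x := by
    intro x
    have heq : F = fun u : ℝ => ∫ s in (0:ℝ)..u, f s := funext hF
    rw [heq]
    exact intervalIntegral.integral_hasDerivAt_right (hf0.intervalIntegrable _ _)
      (hf0.stronglyMeasurable.stronglyMeasurableAtFilter) hf0.continuousAt
  set g := fun t : ℝ => F t * t ^ (-c) with hg
  have hgd : ∀ x ∈ Ioo (0:ℝ) δ,
      HasDerivAt g (f x * x ^ (-c) + F x * (-c * x ^ (-c - 1))) x := by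
    intro x hx
    exact (hFD x).mul (Real.hasDerivAt_rpow_const (Or.inl hx.1.ne'))
  have hanti : AntitoneOn g (Ioo 0 δ) := by
    apply antitoneOn_of_hasDerivWithinAt_nonpos (convex_Ioo 0 δ)
      (fun x hx => ((hgd x hx).differentiableAt).continuousAt.continuousWithinAt)
      (f' := fun x => f x * x ^ (-c) + F x * (-c * x ^ (-c - 1)))
      (fun x hx => by
        rw [interior_Ioo] at hx
        exact ((hgd x hx).hasDerivWithinAt))
    intro x hx
    rw [interior_Ioo] at hx
    have hx0 : 0 < x := hx.1
    have hpow : (0:ℝ) < x ^ (-c - 1) := Real.rpow_pos_of_pos hx0 _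
    have hxc : x ^ (-c) = x ^ (-c - 1) * x := by
      rw [← Real.rpow_add_one hx0.ne']; congr 1; ring
    have hle := hcon' x hx0 hx.2
    have heq : f x * x ^ (-c) + F x * (-c * x ^ (-c - 1))
        = x ^ (-c - 1) * (f x * x - c * F x) := by rw [hxc]; ring
    rw [heq]
    exact mul_nonpos_of_nonneg_of_nonpos hpow.le (by linarith)
  set t0 := δ / 2 with ht0def
  have ht0 : t0 ∈ Ioo (0:ℝ) δ := ⟨by linarith, by linarith⟩
  have hgt0 : 0 < g t0 :=
    mul_pos (hFpos t0 ht0.1 ht0.2) (Real.rpow_pos_of_pos ht0.1 _)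
  obtain ⟨δ', hδ', hsm⟩ := hsmall (g t0 / 2) (by linarith)
  set s := min t0 (δ' / 2) with hsdef
  have hs0 : 0 < s := lt_min ht0.1 (by linarith)
  have hsmem : s ∈ Ioo (0:ℝ) δ := ⟨hs0, lt_of_le_of_lt (min_le_left _ _) ht0.2⟩
  have h1 : g t0 ≤ g s := hanti hsmem ht0 (min_le_left _ _)
  have hsδ' : |s| < δ' := by
    rw [abs_of_pos hs0]; exact lt_of_le_of_lt (min_le_right _ _) (by linarith)
  have h2 := (hsm s hs0.ne' hsδ').2
  rw [abs_of_pos hs0] at h2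
  have hsc : (0:ℝ) < s ^ c := Real.rpow_pos_of_pos hs0 _
  have hFs : F s ≤ g t0 / 2 * s ^ c := (le_abs_self _).trans h2
  have h3 : g s ≤ g t0 / 2 := by
    have hgs : g s = F s * (s ^ c)⁻¹ := by
      show F s * s ^ (-c) = _
      rw [Real.rpow_neg hs0.le]
    rw [hgs]
    calc F s * (s ^ c)⁻¹ ≤ g t0 / 2 * s ^ c * (s ^ c)⁻¹ :=
          mul_le_mul_of_nonneg_right hFs (inv_nonneg.2 hsc.le)
      _ = g t0 / 2 := by field_simp
  linarith

private lemma my_dense_neg {c : ℝ} (hc : 2 < c) {f F : ℝ → ℝ} (hf0 : Continuous f)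
    (hF : ∀ t : ℝ, F t = ∫ s in (0:ℝ)..t, f s)
    (hsmall : ∀ ε > 0, ∃ δ' > 0, ∀ t : ℝ, t ≠ 0 → |t| < δ' →
      |f t| ≤ ε * |t| ^ (c - 1) ∧ |F t| ≤ ε * |t| ^ c)
    (hFtpos : ∀ t : ℝ, t ≠ 0 → 0 < f t * t - 2 * F t) :
    ∀ δ > 0, ∃ t : ℝ, -δ < t ∧ t < 0 ∧ c * F t < f t * t := by
  intro δ hδ
  by_contra hcon
  push_neg at hcon
  have hcon' : ∀ t : ℝ, -δ < t → t < 0 → f t * t ≤ c * F t := by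
    intro t h1 h2; exact hcon t h1 h2
  have hFpos : ∀ t : ℝ, -δ < t → t < 0 → 0 < F t := by
    intro t ht htδ
    have h1 := hFtpos t htδ.ne
    have h2 := hcon' t ht htδ
    nlinarith
  have hFD : ∀ x : ℝ, HasDerivAt F (f x) x := by
    intro x
    have heq : F = fun u : ℝ => ∫ s in (0:ℝ)..u, f s := funext hF
    rw [heq]
    exact intervalIntegral.integral_hasDerivAt_right (hf0.intervalIntegrable _ _)
      (hf0.stronglyMeasurable.stronglyMeasurableAtFilter) hf0.continuousAt
  set g := fun t : ℝ => F t * (-t) ^ (-c) with hg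
  have hnegd : ∀ x : ℝ, x < 0 →
      HasDerivAt (fun t : ℝ => (-t) ^ (-c)) (c * (-x) ^ (-c - 1)) x := by
    intro x hx
    have h1 : HasDerivAt (fun u : ℝ => u ^ (-c)) (-c * (-x) ^ (-c - 1)) (-x) :=
      Real.hasDerivAt_rpow_const (Or.inl (by linarith : -x ≠ 0))
    have h2 : HasDerivAt (fun t : ℝ => -t) (-1) x := (hasDerivAt_id x).neg
    have h3 := h1.comp x h2
    rw [show c * (-x) ^ (-c - 1) = -c * (-x) ^ (-c - 1) * -1 by ring]
    exact h3
  have hgd : ∀ x ∈ Ioo (-δ) (0:ℝ),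
      HasDerivAt g (f x * (-x) ^ (-c) + F x * (c * (-x) ^ (-c - 1))) x := by
    intro x hx
    exact (hFD x).mul (hnegd x hx.2)
  have hmono : MonotoneOn g (Ioo (-δ) 0) := by
    apply monotoneOn_of_hasDerivWithinAt_nonneg (convex_Ioo (-δ) 0)
      (fun x hx => ((hgd x hx).differentiableAt).continuousAt.continuousWithinAt)
      (f' := fun x => f x * (-x) ^ (-c) + F x * (c * (-x) ^ (-c - 1)))
      (fun x hx => by
        rw [interior_Ioo] at hx
        exact ((hgd x hx).hasDerivWithinAt))
    intro x hx
    rw [interior_Ioo] at hx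
    have hx0 : x < 0 := hx.2
    have hxpos : (0:ℝ) < -x := by linarith
    have hpow : (0:ℝ) < (-x) ^ (-c - 1) := Real.rpow_pos_of_pos hxpos _
    have hxc : (-x) ^ (-c) = (-x) ^ (-c - 1) * (-x) := by
      rw [← Real.rpow_add_one hxpos.ne']; congr 1; ring
    have hle := hcon' x hx.1 hx0
    have heq : f x * (-x) ^ (-c) + F x * (c * (-x) ^ (-c - 1))
        = (-x) ^ (-c - 1) * (c * F x - f x * x) := by rw [hxc]; ring
    rw [heq]
    exact mul_nonneg hpow.le (by linarith)
  set t0 := -δ / 2 with ht0def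
  have ht0 : t0 ∈ Ioo (-δ) (0:ℝ) := ⟨by linarith, by linarith⟩
  have ht0pos : (0:ℝ) < -t0 := by rw [ht0def]; linarith
  have hgt0 : 0 < g t0 :=
    mul_pos (hFpos t0 ht0.1 ht0.2) (Real.rpow_pos_of_pos ht0pos _)
  obtain ⟨δ', hδ', hsm⟩ := hsmall (g t0 / 2) (by linarith)
  set s := max t0 (-δ' / 2) with hsdef
  have hs0 : s < 0 := max_lt ht0.2 (by linarith)
  have hsmem : s ∈ Ioo (-δ) (0:ℝ) := ⟨lt_of_lt_of_le ht0.1 (le_max_left _ _), hs0⟩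
  have h1 : g t0 ≤ g s := hmono ht0 hsmem (le_max_left _ _)
  have hsδ' : |s| < δ' := by
    rw [abs_of_neg hs0]
    have : -δ' / 2 ≤ s := le_max_right _ _
    linarith
  have h2 := (hsm s hs0.ne hsδ').2
  rw [abs_of_neg hs0] at h2
  have hspos : (0:ℝ) < -s := by linarith
  have hsc : (0:ℝ) < (-s) ^ c := Real.rpow_pos_of_pos hspos _
  have hFs : F s ≤ g t0 / 2 * (-s) ^ c := (le_abs_self _).trans h2
  have h3 : g s ≤ g t0 / 2 := by
    have hgs : g s = F s * ((-s) ^ c)⁻¹ := by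
      show F s * (-s) ^ (-c) = _
      rw [Real.rpow_neg hspos.le]
    rw [hgs]
    calc F s * ((-s) ^ c)⁻¹ ≤ g t0 / 2 * (-s) ^ c * ((-s) ^ c)⁻¹ :=
          mul_le_mul_of_nonneg_right hFs (inv_nonneg.2 hsc.le)
      _ = g t0 / 2 := by field_simp
  linarith

theorem stmt_2 (N : ℕ) (hN : 3 ≤ N) (p : ℝ) (hp2 : 2 ≤ p) (hpN : p < (N : ℝ))
    (f F Ft : ℝ → ℝ) (hf0 : Continuous f)
    (hF : ∀ t : ℝ, F t = ∫ s in (0:ℝ)..t, f s)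
    (hFt : ∀ t : ℝ, Ft t = f t * t - 2 * F t)
    (hf1 : Tendsto (fun t : ℝ => f t / |t| ^ (p + 2 * p / (N : ℝ) - 1)) (nhdsWithin 0 {0}ᶜ) (nhds 0))
    (hf2 : Tendsto (fun t : ℝ => f t / |t| ^ ((N : ℝ) * p / ((N : ℝ) - p) - 1)) (cocompact ℝ) (nhds 0))
    (hf3 : Tendsto (fun t : ℝ => F t / |t| ^ (p + 2 * p / (N : ℝ))) (cocompact ℝ) atTop)
    (hf4a : StrictAntiOn (fun t : ℝ => Ft t / |t| ^ (p + 2 * p / (N : ℝ))) (Iio 0))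
    (hf4b : StrictMonoOn (fun t : ℝ => Ft t / |t| ^ (p + 2 * p / (N : ℝ))) (Ioi 0)) :
    ∃ θp θm : ℕ → ℝ,
      (∀ n : ℕ, 0 < θp n) ∧ (∀ n : ℕ, θm n < 0) ∧
      Tendsto (fun n : ℕ => |θp n|) atTop (nhds 0) ∧
      Tendsto (fun n : ℕ => |θm n|) atTop (nhds 0) ∧
      (∀ n : ℕ, f (θp n) * θp n > (p + 2 * p / (N : ℝ)) * F (θp n)) ∧
      (∀ n : ℕ, f (θm n) * θm n > (p + 2 * p / (N : ℝ)) * F (θm n)) := by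
  set c := p + 2 * p / (N : ℝ) with hcdef
  have hN0 : (0:ℝ) < N := by
    have : (3:ℝ) ≤ N := by exact_mod_cast hN
    linarith
  have hc2 : 2 < c := by
    have h2p : 0 < 2 * p / (N : ℝ) := by positivity
    rw [hcdef]; linarith
  have hc1 : 1 < c := by linarith
  have hsmall := my_small_bound hc1 hf0 hF hf1
  have hFtpos := my_Ft_pos hc1 hFt hsmall hf4a hf4b
  have hFtpos' : ∀ t : ℝ, t ≠ 0 → 0 < f t * t - 2 * F t := by
    intro t ht
    have := hFtpos t ht
    rw [hFt t] at this
    exact this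
  have hp' := my_dense_pos hc2 hf0 hF hsmall hFtpos'
  have hm' := my_dense_neg hc2 hf0 hF hsmall hFtpos'
  have hpn : ∀ n : ℕ, ∃ t : ℝ, 0 < t ∧ t < 1 / (n + 1 : ℝ) ∧ c * F t < f t * t :=
    fun n => hp' (1 / (n + 1 : ℝ)) (by positivity)
  have hmn : ∀ n : ℕ, ∃ t : ℝ, -(1 / (n + 1 : ℝ)) < t ∧ t < 0 ∧ c * F t < f t * t :=
    fun n => hm' (1 / (n + 1 : ℝ)) (by positivity)
  choose θp hθp1 hθp2 hθp3 using hpn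
  choose θm hθm1 hθm2 hθm3 using hmn
  refine ⟨θp, θm, hθp1, hθm2, ?_, ?_, fun n => hθp3 n, fun n => hθm3 n⟩
  · apply squeeze_zero (fun n => abs_nonneg _) (fun n => ?_)
      tendsto_one_div_add_atTop_nhds_zero_nat
    rw [abs_of_pos (hθp1 n)]
    exact (hθp2 n).le
  · apply squeeze_zero (fun n => abs_nonneg _) (fun n => ?_)
      tendsto_one_div_add_atTop_nhds_zero_nat
    rw [abs_of_neg (hθm2 n)]
    have := hθm1 n
    linarith
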